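/- There exists a spherical convex body C ⊂ S^2 (an isosceles spherical triangle with arms longer than π/2 and base shorter than π/2) whose thickness is at most π/2 but for which the diameter of the set of extreme points is strictly smaller than the diameter of C. -/

import Mathlib

noncomputable section

/-- Euclidean space ℝⁿ. -/
abbrev Esp (n : ℕ) := EuclideanSpace ℝ (Fin n)

/-- The unit sphere in ℝⁿ. -/
def uSphere (n : ℕ) : Set (Esp n) := {x | ‖x‖ = 1}

/-- Geodesic (angular) distance between unit vectors. -/
def sdist {n : ℕ} (a b : Esp n) : ℝ := Real.arccos (inner ℝ a b : ℝ)

/-- Closed hemisphere with center `m`. -/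
def Hemi {n : ℕ} (m : Esp n) : Set (Esp n) := {x ∈ uSphere n | 0 ≤ (inner ℝ m x : ℝ)}

/-- The great sphere (great circle for n = 3) bounding the hemisphere centered at `m`. -/
def gSphere {n : ℕ} (m : Esp n) : Set (Esp n) := {x ∈ uSphere n | (inner ℝ m x : ℝ) = 0}

/-- The shorter great-circle arc between `a` and `b`: points through which a
minimizing geodesic from `a` to `b` passes. -/
def Arc {n : ℕ} (a b : Esp n) : Set (Esp n) :=
  {x ∈ uSphere n | sdist a x + sdist x b = sdist a b}

/-- Spherically convex set: contained in the sphere, no antipodal pairs, and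
closed under taking shorter arcs. -/
def SphConvex {n : ℕ} (C : Set (Esp n)) : Prop :=
  C ⊆ uSphere n ∧ (∀ x ∈ C, -x ∉ C) ∧ ∀ a ∈ C, ∀ b ∈ C, Arc a b ⊆ C

/-- Interior of a subset of the sphere relative to the sphere. -/
def sphInterior {n : ℕ} (C : Set (Esp n)) : Set (Esp n) :=
  {x ∈ uSphere n | ∃ ε > 0, ∀ y ∈ uSphere n, dist y x < ε → y ∈ C}

/-- Spherical convex body: closed, spherically convex, with nonempty interior
relative to the sphere. -/
def SphBody {n : ℕ} (C : Set (Esp n)) : Prop :=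
  SphConvex C ∧ IsClosed C ∧ (sphInterior C).Nonempty

/-- Boundary of a closed subset of the sphere relative to the sphere. -/
def sphBoundary {n : ℕ} (C : Set (Esp n)) : Set (Esp n) := C \ sphInterior C

/-- `g`, `h` are centers of two distinct non-opposite hemispheres. -/
def IsLune {n : ℕ} (g h : Esp n) : Prop :=
  g ∈ uSphere n ∧ h ∈ uSphere n ∧ g ≠ h ∧ g ≠ -h

/-- The lune determined by hemisphere centers `g` and `h`. -/
def Lune {n : ℕ} (g h : Esp n) : Set (Esp n) := Hemi g ∩ Hemi h

/-- The (d-1)-dimensional hemisphere `G/H` bounding the lune `G ∩ H`: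
part of the great sphere of `G` lying in `H`.  (A semicircle when n = 3.) -/
def semic {n : ℕ} (g h : Esp n) : Set (Esp n) :=
  {x ∈ uSphere n | (inner ℝ g x : ℝ) = 0 ∧ 0 ≤ (inner ℝ h x : ℝ)}

/-- The center of the bounding hemisphere `G/H` of the lune `G ∩ H`:
the normalized projection of `h` onto the hyperplane orthogonal to `g`. -/
def scCenter {n : ℕ} (g h : Esp n) : Esp n :=
  ‖h - (inner ℝ g h : ℝ) • g‖⁻¹ • (h - (inner ℝ g h : ℝ) • g)

/-- Thickness of a lune: distance between the centers of its two bounding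
hemispheres. -/
def lthick {n : ℕ} (g h : Esp n) : ℝ := sdist (scCenter g h) (scCenter h g)

/-- Thickness of a convex body: minimal thickness of a lune containing it. -/
def thick {n : ℕ} (C : Set (Esp n)) : ℝ :=
  sInf {t | ∃ g h, IsLune g h ∧ C ⊆ Lune g h ∧ lthick g h = t}

/-- Reduced spherical body. -/
def Reduced {n : ℕ} (R : Set (Esp n)) : Prop :=
  SphBody R ∧ ∀ Z, SphBody Z → Z ⊆ R → Z ≠ R → thick Z < thick R

/-- Geodesic diameter of a set on the sphere. -/
def sdiam {n : ℕ} (C : Set (Esp n)) : ℝ :=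
  sSup {t | ∃ a ∈ C, ∃ b ∈ C, sdist a b = t}

/-- The hemisphere centered at `m` supports `C` at `p`. -/
def SupportsAt {n : ℕ} (C : Set (Esp n)) (m p : Esp n) : Prop :=
  m ∈ uSphere n ∧ C ⊆ Hemi m ∧ p ∈ C ∧ (inner ℝ m p : ℝ) = 0

/-- The hemisphere centered at `m` supports `C`. -/
def Supports {n : ℕ} (C : Set (Esp n)) (m : Esp n) : Prop := ∃ p, SupportsAt C m p

/-- The width of `C` determined by the supporting hemisphere centered at `m`:
minimal thickness of a lune `M ∩ M*` over supporting hemispheres `M*` of `C`. -/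
def sWidth {n : ℕ} (C : Set (Esp n)) (m : Esp n) : ℝ :=
  sInf {t | ∃ h, Supports C h ∧ IsLune m h ∧ C ⊆ Lune m h ∧ lthick m h = t}

/-- `C` is of constant width `w`. -/
def ConstWidth {n : ℕ} (C : Set (Esp n)) (w : ℝ) : Prop :=
  ∀ m, Supports C m → sWidth C m = w

/-- Extreme point of a spherically convex set. -/
def ExtremeP {n : ℕ} (C : Set (Esp n)) (e : Esp n) : Prop :=
  e ∈ C ∧ ∀ a ∈ C, ∀ b ∈ C, e ∈ Arc a b → e = a ∨ e = b

/-- `p` is a smooth boundary point: exactly one hemisphere supports `C` at `p`. -/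
def SmoothPoint {n : ℕ} (C : Set (Esp n)) (p : Esp n) : Prop :=
  ∃! m, SupportsAt C m p

/-- Strict convexity: the boundary contains no nondegenerate great-circle arc. -/
def StrictlyConvexS {n : ℕ} (C : Set (Esp n)) : Prop :=
  ∀ a ∈ sphBoundary C, ∀ b ∈ sphBoundary C, Arc a b ⊆ sphBoundary C → a = b

end

noncomputable section


lemma scalar_aux (c d e : ℝ) (hD : 1 - e^2 ≠ 0) (hdet : c^2+d^2+e^2-2*c*d*e = 1) :
  1 - 2*((c-d*e)/(1-e^2)*c + (d-c*e)/(1-e^2)*d) + (((c-d*e)/(1-e^2))^2 + ((d-c*e)/(1-e^2))^2 + 2*((c-d*e)/(1-e^2))*((d-c*e)/(1-e^2))*e) = 0 := by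
  field_simp
  linear_combination (-(1-e^2)) * hdet

lemma key {n : ℕ} {a b x : Esp n} (ha : ‖a‖ = 1) (hb : ‖b‖ = 1) (hx : ‖x‖ = 1)
    (he : (inner ℝ a b : ℝ)^2 ≠ 1)
    (harc : Real.arccos (inner ℝ a x) + Real.arccos (inner ℝ x b) = Real.arccos (inner ℝ a b)) :
    ∃ s t : ℝ, 0 ≤ s ∧ 0 ≤ t ∧ x = s • a + t • b := by
  set c : ℝ := inner ℝ a x with hc
  set d : ℝ := inner ℝ x b with hd
  set e : ℝ := inner ℝ a b with heq
  have hbc : |c| ≤ 1 := by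
    have := abs_real_inner_le_norm a x; rwa [ha, hx, one_mul] at this
  have hbd : |d| ≤ 1 := by
    have := abs_real_inner_le_norm x b; rwa [hb, hx, one_mul] at this
  have hbe : |e| ≤ 1 := by
    have := abs_real_inner_le_norm a b; rwa [ha, hb, one_mul] at this
  rw [abs_le] at hbc hbd hbe
  have hD : 0 < 1 - e^2 := by
    have h1 : e^2 ≤ 1 := by nlinarith [hbe.1, hbe.2]
    rcases lt_or_eq_of_le h1 with h | h
    · linarith
    · exact absurd h he
  set u : ℝ := Real.sqrt (1 - c^2) with hu
  set v : ℝ := Real.sqrt (1 - d^2) with hv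
  set w : ℝ := Real.sqrt (1 - e^2) with hw
  have hu2 : u^2 = 1 - c^2 := Real.sq_sqrt (by nlinarith [hbc.1, hbc.2])
  have hv2 : v^2 = 1 - d^2 := Real.sq_sqrt (by nlinarith [hbd.1, hbd.2])
  have hu0 : 0 ≤ u := Real.sqrt_nonneg _
  have hv0 : 0 ≤ v := Real.sqrt_nonneg _
  have hw0 : 0 ≤ w := Real.sqrt_nonneg _
  have h1 : c*d - u*v = e := by
    have := Real.cos_arccos hbe.1 hbe.2
    rw [← harc, Real.cos_add, Real.cos_arccos hbc.1 hbc.2, Real.cos_arccos hbd.1 hbd.2,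
      Real.sin_arccos, Real.sin_arccos] at this
    rw [← this]
  have h2 : u*d + c*v = w := by
    have := Real.sin_arccos e
    rw [← harc, Real.sin_add, Real.cos_arccos hbc.1 hbc.2, Real.cos_arccos hbd.1 hbd.2,
      Real.sin_arccos, Real.sin_arccos] at this
    rw [← hw] at this
    linarith [this]
  have hdet : c^2 + d^2 + e^2 - 2*c*d*e = 1 := by
    have h3 : (c*d - e)^2 = (1-c^2)*(1-d^2) := by
      rw [← hu2, ← hv2, ← h1]; ring
    nlinarith [h3]
  refine ⟨(c - d*e)/(1-e^2), (d - c*e)/(1-e^2), ?_, ?_, ?_⟩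
  · apply div_nonneg _ (le_of_lt hD)
    have hnum : c - d*e = v * w := by
      rw [← h2, ← h1]; linear_combination (-c) * hv2
    rw [hnum]; positivity
  · apply div_nonneg _ (le_of_lt hD)
    have hnum : d - c*e = u * w := by
      rw [← h2, ← h1]; linear_combination (-d) * hu2
    rw [hnum]; positivity
  · set s : ℝ := (c - d*e)/(1-e^2) with hs
    set t : ℝ := (d - c*e)/(1-e^2) with ht
    have hxx : (inner ℝ x x : ℝ) = 1 := by
      rw [real_inner_self_eq_norm_mul_norm, hx]; norm_num
    have haa : (inner ℝ a a : ℝ) = 1 := by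
      rw [real_inner_self_eq_norm_mul_norm, ha]; norm_num
    have hbb : (inner ℝ b b : ℝ) = 1 := by
      rw [real_inner_self_eq_norm_mul_norm, hb]; norm_num
    have hxa : (inner ℝ x a : ℝ) = c := by rw [real_inner_comm]
    have hbx : (inner ℝ b x : ℝ) = d := by rw [real_inner_comm]
    have hba : (inner ℝ b a : ℝ) = e := by rw [real_inner_comm]
    have expand : (inner ℝ (x - (s • a + t • b)) (x - (s • a + t • b)) : ℝ)
        = 1 - 2*(s*c + t*d) + (s^2 + t^2 + 2*s*t*e) := by
      simp only [inner_sub_left, inner_sub_right, inner_add_left, inner_add_right,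
        real_inner_smul_left, real_inner_smul_right]
      rw [hxx, haa, hbb, hxa, hbx, hba, ← hc, ← hd, ← heq]
      ring
    have hzero : (inner ℝ (x - (s • a + t • b)) (x - (s • a + t • b)) : ℝ) = 0 := by
      rw [expand, hs, ht]
      have := scalar_aux c d e (ne_of_gt hD) hdet
      linarith [this]
    have := inner_self_eq_zero.1 hzero
    have h' := sub_eq_zero.1 this
    exact h'

def v3 (a b c : ℝ) : Esp 3 := WithLp.toLp 2 ![a,b,c]
@[simp] lemma v3_apply0 (a b c : ℝ) : v3 a b c 0 = a := rfl
@[simp] lemma v3_apply1 (a b c : ℝ) : v3 a b c 1 = b := rfl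
@[simp] lemma v3_apply2 (a b c : ℝ) : v3 a b c 2 = c := rfl
lemma inner3 (x y : Esp 3) : (inner ℝ x y : ℝ) = x 0 * y 0 + x 1 * y 1 + x 2 * y 2 := by
  simp [PiLp.inner_apply, Fin.sum_univ_three]; ring
lemma norm3 (x : Esp 3) : ‖x‖ = Real.sqrt ((x 0)^2 + (x 1)^2 + (x 2)^2) := by
  rw [EuclideanSpace.norm_eq, Fin.sum_univ_three]; simp [Real.norm_eq_abs, sq_abs]
lemma norm3_eq_one {x : Esp 3} (h : (x 0)^2 + (x 1)^2 + (x 2)^2 = 1) : ‖x‖ = 1 := by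
  rw [norm3, h, Real.sqrt_one]
lemma sq3_of_norm_one {x : Esp 3} (h : ‖x‖ = 1) : (x 0)^2 + (x 1)^2 + (x 2)^2 = 1 := by
  rw [norm3] at h
  have h' := congrArg (· ^ 2) h
  simpa [Real.sq_sqrt (by positivity : (0:ℝ) ≤ (x 0)^2 + (x 1)^2 + (x 2)^2)] using h'
lemma eq_v3 (x : Esp 3) (a b c : ℝ) (h0 : x 0 = a) (h1 : x 1 = b) (h2 : x 2 = c) : x = v3 a b c := by
  ext i; fin_cases i <;> simpa

def r3 : ℝ := Real.sqrt 3
def r13 : ℝ := Real.sqrt 13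
lemma r3_sq : r3^2 = 3 := Real.sq_sqrt (by norm_num)
lemma r3_pos : 0 < r3 := Real.sqrt_pos.2 (by norm_num)
lemma r13_sq : r13^2 = 13 := Real.sq_sqrt (by norm_num)
lemma r13_pos : 0 < r13 := Real.sqrt_pos.2 (by norm_num)
lemma r13_lt_four : r13 < 4 := by
  nlinarith [r13_sq, r13_pos]
lemma r13_gt_two : 2 < r13 := by nlinarith [r13_sq, r13_pos]

def g1 : Esp 3 := v3 (1/2) (-(r3/2)) 0
def g2 : Esp 3 := v3 (1/2) (r3/2) 0
def g3 : Esp 3 := v3 (2/r13) 0 (3/r13)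
def pN : Esp 3 := v3 0 0 1
def pB1 : Esp 3 := v3 (3/4) (r3/4) (-(1/2))
def pB2 : Esp 3 := v3 (3/4) (-(r3/4)) (-(1/2))
def pM : Esp 3 := v3 (3/r13) 0 (-(2/r13))

def Cb : Set (Esp 3) :=
  {x ∈ uSphere 3 | 0 ≤ (inner ℝ g1 x : ℝ) ∧ 0 ≤ (inner ℝ g2 x : ℝ) ∧ 0 ≤ (inner ℝ g3 x : ℝ)}

lemma norm_g1 : ‖g1‖ = 1 := norm3_eq_one (by simp [g1]; nlinarith [r3_sq])
lemma norm_g2 : ‖g2‖ = 1 := norm3_eq_one (by simp [g2]; nlinarith [r3_sq])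
lemma norm_g3 : ‖g3‖ = 1 := norm3_eq_one (by
  simp [g3]
  have := r13_sq; have := r13_pos
  field_simp
  nlinarith [r13_sq])
lemma norm_pN : ‖pN‖ = 1 := norm3_eq_one (by simp [pN])
lemma norm_pB1 : ‖pB1‖ = 1 := norm3_eq_one (by simp [pB1]; nlinarith [r3_sq])
lemma norm_pB2 : ‖pB2‖ = 1 := norm3_eq_one (by simp [pB2]; nlinarith [r3_sq])
lemma norm_pM : ‖pM‖ = 1 := norm3_eq_one (by
  simp [pM]; have := r13_pos; field_simp; nlinarith [r13_sq])
lemma i_g1_g2 : (inner ℝ g1 g2 : ℝ) = -(1/2) := by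
  rw [inner3]; simp [g1, g2]; nlinarith [r3_sq]
lemma i_g1_g3 : (inner ℝ g1 g3 : ℝ) = 1/r13 := by
  rw [inner3]; simp [g1, g3]; ring
lemma i_g2_g3 : (inner ℝ g2 g3 : ℝ) = 1/r13 := by
  rw [inner3]; simp [g2, g3]; ring
lemma i_g1_N : (inner ℝ g1 pN : ℝ) = 0 := by rw [inner3]; simp [g1, pN]
lemma i_g2_N : (inner ℝ g2 pN : ℝ) = 0 := by rw [inner3]; simp [g2, pN]
lemma i_g3_N : (inner ℝ g3 pN : ℝ) = 3/r13 := by rw [inner3]; simp [g3, pN]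
lemma i_g1_B1 : (inner ℝ g1 pB1 : ℝ) = 0 := by
  rw [inner3]; simp [g1, pB1]; nlinarith [r3_sq]
lemma i_g2_B1 : (inner ℝ g2 pB1 : ℝ) = 3/4 := by
  rw [inner3]; simp [g2, pB1]; nlinarith [r3_sq]
lemma i_g3_B1 : (inner ℝ g3 pB1 : ℝ) = 0 := by
  rw [inner3]; simp [g3, pB1]; ring
lemma i_g1_B2 : (inner ℝ g1 pB2 : ℝ) = 3/4 := by
  rw [inner3]; simp [g1, pB2]; nlinarith [r3_sq]
lemma i_g2_B2 : (inner ℝ g2 pB2 : ℝ) = 0 := by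
  rw [inner3]; simp [g2, pB2]; nlinarith [r3_sq]
lemma i_g3_B2 : (inner ℝ g3 pB2 : ℝ) = 0 := by
  rw [inner3]; simp [g3, pB2]; ring
lemma i_g1_M : (inner ℝ g1 pM : ℝ) = 3/(2*r13) := by
  rw [inner3]; simp [g1, pM]; ring
lemma i_g2_M : (inner ℝ g2 pM : ℝ) = 3/(2*r13) := by
  rw [inner3]; simp [g2, pM]; ring
lemma i_g3_M : (inner ℝ g3 pM : ℝ) = 0 := by
  rw [inner3]; simp [g3, pM]; ring
lemma i_N_M : (inner ℝ pN pM : ℝ) = -(2/r13) := by rw [inner3]; simp [pN, pM]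
lemma i_N_B1 : (inner ℝ pN pB1 : ℝ) = -(1/2) := by rw [inner3]; simp [pN, pB1]
lemma i_N_B2 : (inner ℝ pN pB2 : ℝ) = -(1/2) := by rw [inner3]; simp [pN, pB2]
lemma i_B1_B2 : (inner ℝ pB1 pB2 : ℝ) = 5/8 := by
  rw [inner3]; simp [pB1, pB2]; nlinarith [r3_sq]

lemma N_mem : pN ∈ Cb :=
  ⟨norm_pN, by rw [i_g1_N], by rw [i_g2_N], by rw [i_g3_N]; exact div_nonneg (by norm_num) (le_of_lt r13_pos)⟩
lemma B1_mem : pB1 ∈ Cb :=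
  ⟨norm_pB1, by rw [i_g1_B1], by rw [i_g2_B1]; norm_num, by rw [i_g3_B1]⟩
lemma B2_mem : pB2 ∈ Cb :=
  ⟨norm_pB2, by rw [i_g1_B2]; norm_num, by rw [i_g2_B2], by rw [i_g3_B2]⟩
lemma M_mem : pM ∈ Cb :=
  ⟨norm_pM, by rw [i_g1_M]; exact div_nonneg (by norm_num) (by nlinarith [r13_pos]), by rw [i_g2_M]; exact div_nonneg (by norm_num) (by nlinarith [r13_pos]), by rw [i_g3_M]⟩

-- vertex characterizations
lemma vert_N {e : Esp 3} (he : ‖e‖ = 1) (h1 : (inner ℝ g1 e : ℝ) = 0)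
    (h2 : (inner ℝ g2 e : ℝ) = 0) (h3 : 0 ≤ (inner ℝ g3 e : ℝ)) : e = pN := by
  rw [inner3] at h1 h2 h3
  simp [g1] at h1; simp [g2] at h2; simp [g3] at h3
  have hn := sq3_of_norm_one he
  have hr3 := r3_sq; have hr3p := r3_pos
  have h13 := r13_pos
  have he0 : e 0 = 0 := by linarith
  have he1 : e 1 = 0 := by nlinarith
  have h3' : 0 ≤ e 2 := by
    by_contra hcon
    push_neg at hcon
    have : 2/r13 * e 0 + 3/r13 * e 2 < 0 := by
      rw [he0]
      have : 3/r13 > 0 := by positivity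
      nlinarith
    linarith
  have he2 : e 2 = 1 := by nlinarith
  exact eq_v3 e 0 0 1 he0 he1 he2

lemma vert_B1 {e : Esp 3} (he : ‖e‖ = 1) (h1 : (inner ℝ g1 e : ℝ) = 0)
    (h3 : (inner ℝ g3 e : ℝ) = 0) (h2 : 0 ≤ (inner ℝ g2 e : ℝ)) : e = pB1 := by
  rw [inner3] at h1 h2 h3
  simp [g1] at h1; simp [g2] at h2; simp [g3] at h3
  have hn := sq3_of_norm_one he
  have hr3 := r3_sq; have hr3p := r3_pos
  have h13p := r13_pos
  -- h1 : 1/2 * e 0 - r3/2 * e 1 = 0 (shape unknown), h3 : 2/r13*e0 + 3/r13*e2 = 0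
  have h3' : 2 * e 0 + 3 * e 2 = 0 := by
    have := mul_ne_zero (ne_of_gt h13p) (ne_of_gt h13p)
    field_simp at h3
    linarith
  have hE1 : e 0 = r3 * e 1 := by nlinarith
  have hE2 : e 2 = -(2/3) * e 0 := by linarith
  -- norm: e0^2 + e0^2/3 + 4/9 e0^2 = 1
  have hsq : (e 0)^2 = 9/16 := by nlinarith
  have hpos : 0 ≤ e 0 := by nlinarith
  have he0 : e 0 = 3/4 := by nlinarith
  have he1 : e 1 = r3/4 := by nlinarith
  have he2 : e 2 = -(1/2) := by nlinarith
  exact eq_v3 e _ _ _ he0 he1 he2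

lemma vert_B2 {e : Esp 3} (he : ‖e‖ = 1) (h2 : (inner ℝ g2 e : ℝ) = 0)
    (h3 : (inner ℝ g3 e : ℝ) = 0) (h1 : 0 ≤ (inner ℝ g1 e : ℝ)) : e = pB2 := by
  rw [inner3] at h1 h2 h3
  simp [g1] at h1; simp [g2] at h2; simp [g3] at h3
  have hn := sq3_of_norm_one he
  have hr3 := r3_sq; have hr3p := r3_pos
  have h13p := r13_pos
  have h3' : 2 * e 0 + 3 * e 2 = 0 := by
    field_simp at h3
    linarith
  have hE1 : e 0 = -(r3 * e 1) := by nlinarith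
  have hE2 : e 2 = -(2/3) * e 0 := by linarith
  have hsq : (e 0)^2 = 9/16 := by nlinarith
  have hpos : 0 ≤ e 0 := by nlinarith
  have he0 : e 0 = 3/4 := by nlinarith
  have he1 : e 1 = -(r3/4) := by nlinarith
  have he2 : e 2 = -(1/2) := by nlinarith
  exact eq_v3 e _ _ _ he0 he1 he2


-- unit vector dichotomies
lemma inner_one_eq {a b : Esp 3} (ha : ‖a‖ = 1) (hb : ‖b‖ = 1)
    (h : (inner ℝ a b : ℝ) = 1) : a = b := by
  have hx : ‖a - b‖^2 = 0 := by
    rw [norm_sub_sq_real, ha, hb, h]; norm_num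
  have h0 := pow_eq_zero_iff (n := 2) (by norm_num) |>.1 hx
  exact sub_eq_zero.1 (norm_eq_zero.1 h0)

lemma inner_negone_eq {a b : Esp 3} (ha : ‖a‖ = 1) (hb : ‖b‖ = 1)
    (h : (inner ℝ a b : ℝ) = -1) : b = -a := by
  have hx : ‖a + b‖^2 = 0 := by
    rw [norm_add_sq_real, ha, hb, h]; norm_num
  have h0 := pow_eq_zero_iff (n := 2) (by norm_num) |>.1 hx
  have := norm_eq_zero.1 h0
  have : b = -a := by linear_combination (norm := module) this
  exact this

lemma no_antipodal {x : Esp 3} (hx : x ∈ Cb) : -x ∉ Cb := by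
  rintro ⟨hu, h1, h2, h3⟩
  obtain ⟨hu', k1, k2, k3⟩ := hx
  rw [inner_neg_right] at h1 h2 h3
  have e1 : (inner ℝ g1 x : ℝ) = 0 := le_antisymm (by linarith) k1
  have e2 : (inner ℝ g2 x : ℝ) = 0 := le_antisymm (by linarith) k2
  have e3 : (inner ℝ g3 x : ℝ) = 0 := le_antisymm (by linarith) k3
  rw [inner3] at e1 e2 e3
  simp [g1] at e1; simp [g2] at e2; simp [g3] at e3
  have hr3p := r3_pos; have h13p := r13_pos
  have h0 : x 0 = 0 := by linarith
  have h1' : x 1 = 0 := by nlinarith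
  have h3' : 2 * x 0 + 3 * x 2 = 0 := by field_simp at e3; linarith
  have h2' : x 2 = 0 := by linarith
  have := sq3_of_norm_one hu'
  rw [h0, h1', h2'] at this
  norm_num at this

lemma Cb_convex : SphConvex Cb := by
  refine ⟨fun x hx => hx.1, fun x hx => no_antipodal hx, ?_⟩
  rintro a ha b hb x ⟨hxu, harc⟩
  have hna : ‖a‖ = 1 := ha.1
  have hnb : ‖b‖ = 1 := hb.1
  have hnx : ‖x‖ = 1 := hxu
  by_cases hsq : (inner ℝ a b : ℝ)^2 = 1
  · have hfac : ((inner ℝ a b : ℝ) - 1) * ((inner ℝ a b : ℝ) + 1) = 0 := by linear_combination hsq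
    rcases mul_eq_zero.1 hfac with h | h
    · -- a = b
      have hab : a = b := inner_one_eq hna hnb (by linarith)
      subst hab
      -- sdist a a = 0, so sdist a x = 0, so x = a
      have hone : (inner ℝ a a : ℝ) = 1 := by
        rw [real_inner_self_eq_norm_mul_norm, hna]; norm_num
      unfold sdist at harc
      rw [hone, Real.arccos_one] at harc
      have hb1 : |(inner ℝ a x : ℝ)| ≤ 1 := by
        have := abs_real_inner_le_norm a x; rwa [hna, hnx, one_mul] at this
      have hb2 : |(inner ℝ x a : ℝ)| ≤ 1 := by
        have := abs_real_inner_le_norm x a; rwa [hna, hnx, one_mul] at this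
      rw [abs_le] at hb1 hb2
      have k1 : 0 ≤ Real.arccos (inner ℝ a x : ℝ) := Real.arccos_nonneg _
      have k2 : 0 ≤ Real.arccos (inner ℝ x a : ℝ) := Real.arccos_nonneg _
      have k3 : Real.arccos (inner ℝ a x : ℝ) = 0 := by linarith
      have k4 : (1:ℝ) ≤ (inner ℝ a x : ℝ) := Real.arccos_eq_zero.1 k3
      have k5 : (inner ℝ a x : ℝ) = 1 := le_antisymm hb1.2 k4
      have : x = a := by
        have := inner_one_eq hna hnx k5
        exact this.symm
      rw [this]; exact ha
    · -- b = -a : contradiction with no antipodal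
      have hab : b = -a := inner_negone_eq hna hnb (by linarith)
      exact absurd (hab ▸ hb) (no_antipodal ha)
  · obtain ⟨s, t, hs, ht, hx⟩ := key hna hnb hnx hsq harc
    refine ⟨hxu, ?_, ?_, ?_⟩ <;>
    · rw [hx, inner_add_right, real_inner_smul_right, real_inner_smul_right]
      first
      | exact add_nonneg (mul_nonneg hs ha.2.1) (mul_nonneg ht hb.2.1)
      | exact add_nonneg (mul_nonneg hs ha.2.2.1) (mul_nonneg ht hb.2.2.1)
      | exact add_nonneg (mul_nonneg hs ha.2.2.2) (mul_nonneg ht hb.2.2.2)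


lemma Cb_closed : IsClosed Cb := by
  have : Cb = {x : Esp 3 | ‖x‖ = 1} ∩ ({x | 0 ≤ (inner ℝ g1 x : ℝ)} ∩ ({x | 0 ≤ (inner ℝ g2 x : ℝ)} ∩ {x | 0 ≤ (inner ℝ g3 x : ℝ)})) := by
    ext x; simp [Cb, uSphere, and_assoc]
  rw [this]
  refine (isClosed_eq continuous_norm continuous_const).inter ?_
  refine IsClosed.inter ?_ (IsClosed.inter ?_ ?_) <;>
    exact isClosed_le continuous_const (Continuous.inner continuous_const continuous_id)

def x0 : Esp 3 := v3 (3/5) 0 (4/5)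

lemma x0_sphere : ‖x0‖ = 1 := norm3_eq_one (by simp [x0]; norm_num)

lemma interior_pt : x0 ∈ sphInterior Cb := by
  refine ⟨x0_sphere, 1/4, by norm_num, ?_⟩
  intro y hy hdist
  have hg1 : (inner ℝ g1 x0 : ℝ) = 3/10 := by rw [inner3]; simp [g1, x0]; ring
  have hg2 : (inner ℝ g2 x0 : ℝ) = 3/10 := by rw [inner3]; simp [g2, x0]; ring
  have hg3 : (inner ℝ g3 x0 : ℝ) = 18/(5*r13) := by rw [inner3]; simp [g3, x0]; ring
  have hdn : ‖y - x0‖ < 1/4 := by rwa [dist_eq_norm] at hdist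
  have key : ∀ g : Esp 3, ‖g‖ = 1 → (inner ℝ g x0 : ℝ) ≥ 1/4 → 0 ≤ (inner ℝ g y : ℝ) := by
    intro g hg hgx
    have hsplit : (inner ℝ g y : ℝ) = (inner ℝ g x0 : ℝ) + (inner ℝ g (y - x0) : ℝ) := by
      rw [inner_sub_right]; ring
    have hb : |(inner ℝ g (y - x0) : ℝ)| ≤ ‖y - x0‖ := by
      have := abs_real_inner_le_norm g (y - x0); rwa [hg, one_mul] at this
    rw [abs_le] at hb
    rw [hsplit]; linarith
  have h13 := r13_lt_four
  have h13p := r13_pos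
  refine ⟨hy, key g1 norm_g1 (by rw [hg1]; norm_num), key g2 norm_g2 (by rw [hg2]; norm_num),
    key g3 norm_g3 ?_⟩
  rw [hg3]
  rw [ge_iff_le, le_div_iff₀ (by positivity)]
  nlinarith

lemma Cb_body : SphBody Cb := ⟨Cb_convex, Cb_closed, ⟨x0, interior_pt⟩⟩


lemma i_g2_g1 : (inner ℝ g2 g1 : ℝ) = -(1/2) := by rw [real_inner_comm]; exact i_g1_g2

lemma norm_w12 : ‖v3 (3/4) (r3/4) 0‖ = r3/2 := by
  rw [norm3]
  simp only [v3_apply0, v3_apply1, v3_apply2]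
  rw [show (3/4:ℝ)^2 + (r3/4)^2 + 0^2 = (r3/2)^2 by nlinarith [r3_sq]]
  exact Real.sqrt_sq (by linarith [r3_pos])

lemma norm_w21 : ‖v3 (3/4) (-(r3/4)) 0‖ = r3/2 := by
  rw [norm3]
  simp only [v3_apply0, v3_apply1, v3_apply2]
  rw [show (3/4:ℝ)^2 + (-(r3/4))^2 + 0^2 = (r3/2)^2 by nlinarith [r3_sq]]
  exact Real.sqrt_sq (by linarith [r3_pos])

lemma sc12 : scCenter g1 g2 = v3 (r3/2) (1/2) 0 := by
  unfold scCenter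
  rw [i_g1_g2]
  have hw : g2 - (-(1/2):ℝ) • g1 = v3 (3/4) (r3/4) 0 := by
    ext i; fin_cases i <;> simp [g1, g2] <;> ring
  rw [hw, norm_w12]
  have hr := r3_pos
  ext i; fin_cases i <;> simp <;> field_simp <;> nlinarith [r3_sq]

lemma sc21 : scCenter g2 g1 = v3 (r3/2) (-(1/2)) 0 := by
  unfold scCenter
  rw [i_g2_g1]
  have hw : g1 - (-(1/2):ℝ) • g2 = v3 (3/4) (-(r3/4)) 0 := by
    ext i; fin_cases i <;> simp [g1, g2] <;> ring
  rw [hw, norm_w21]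
  have hr := r3_pos
  ext i; fin_cases i <;> simp <;> field_simp <;> nlinarith [r3_sq]

lemma arccos_half : Real.arccos (1/2) = Real.pi/3 := by
  rw [show (1/2:ℝ) = Real.cos (Real.pi/3) by rw [Real.cos_pi_div_three],
    Real.arccos_cos (by positivity) (by linarith [Real.pi_pos])]

lemma lthick12 : lthick g1 g2 = Real.pi/3 := by
  unfold lthick sdist
  rw [sc12, sc21, inner3]
  simp only [v3_apply0, v3_apply1, v3_apply2]
  rw [show (r3/2)*(r3/2) + (1/2)*(-(1/2)) + (0:ℝ)*0 = 1/2 by nlinarith [r3_sq]]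
  exact arccos_half

lemma thick_le : thick Cb ≤ Real.pi/2 := by
  have hmem : Real.pi/3 ∈ {t | ∃ g h, IsLune g h ∧ Cb ⊆ Lune g h ∧ lthick g h = t} := by
    refine ⟨g1, g2, ⟨norm_g1, norm_g2, ?_, ?_⟩, ?_, lthick12⟩
    · intro h
      have := congrArg (· 1) h
      simp [g1, g2] at this
      nlinarith [r3_pos, this]
    · intro h
      have := congrArg (· 0) h
      simp [g1, g2] at this
      norm_num at this
    · rintro x ⟨hu, h1, h2, h3⟩
      exact ⟨⟨hu, h1⟩, ⟨hu, h2⟩⟩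
  have hbdd : BddBelow {t | ∃ g h, IsLune g h ∧ Cb ⊆ Lune g h ∧ lthick g h = t} := by
    refine ⟨0, ?_⟩
    rintro t ⟨g, h, _, _, rfl⟩
    exact Real.arccos_nonneg _
  calc thick Cb ≤ Real.pi/3 := csInf_le hbdd hmem
    _ ≤ Real.pi/2 := by linarith [Real.pi_pos]


lemma arccos_double {α : ℝ} (h0 : 0 ≤ α) (h1 : α ≤ 1) :
    Real.arccos α + Real.arccos α = Real.arccos (2*α^2 - 1) := by
  have hcos : Real.cos (2 * Real.arccos α) = 2*α^2 - 1 := by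
    rw [Real.cos_two_mul, Real.cos_arccos (by linarith) h1]
  have hle : Real.arccos α ≤ Real.pi/2 := (Real.arccos_le_pi_div_two).2 h0
  rw [← hcos, Real.arccos_cos (by linarith [Real.arccos_nonneg α]) (by linarith)]
  ring

-- cross product
def cr (x y : Esp 3) : Esp 3 :=
  v3 (x 1 * y 2 - x 2 * y 1) (x 2 * y 0 - x 0 * y 2) (x 0 * y 1 - x 1 * y 0)

lemma inner_cr_left (x y : Esp 3) : (inner ℝ x (cr x y) : ℝ) = 0 := by
  rw [inner3]; simp [cr]; ring
lemma inner_cr_right (x y : Esp 3) : (inner ℝ y (cr x y) : ℝ) = 0 := by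
  rw [inner3]; simp [cr]; ring
lemma inner_cr_self (x y : Esp 3) :
    (inner ℝ (cr x y) (cr x y) : ℝ) = (inner ℝ x x : ℝ) * (inner ℝ y y : ℝ) - (inner ℝ x y : ℝ)^2 := by
  rw [inner3, inner3, inner3, inner3]; simp [cr]; ring

lemma norm_eq_one_of_inner_self {w : Esp 3} (h : (inner ℝ w w : ℝ) = 1) : ‖w‖ = 1 := by
  have := real_inner_self_eq_norm_mul_norm w
  nlinarith [norm_nonneg w, this.symm.trans h]

-- the midpoint-of-arc construction
set_option maxHeartbeats 1000000 in
lemma nonext (e v : Esp 3) (heC : e ∈ Cb) (hv : ‖v‖ = 1) (hev : (inner ℝ e v : ℝ) = 0)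
    (β : ℝ) (hβ0 : 0 < β) (hβ1 : β ≤ 1/2)
    (H1 : ((inner ℝ g1 v : ℝ) = 0 ∧ (inner ℝ g1 e : ℝ) = 0) ∨ 2*β ≤ (inner ℝ g1 e : ℝ))
    (H2 : ((inner ℝ g2 v : ℝ) = 0 ∧ (inner ℝ g2 e : ℝ) = 0) ∨ 2*β ≤ (inner ℝ g2 e : ℝ))
    (H3 : ((inner ℝ g3 v : ℝ) = 0 ∧ (inner ℝ g3 e : ℝ) = 0) ∨ 2*β ≤ (inner ℝ g3 e : ℝ)) :
    ¬ ExtremeP Cb e := by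
  have he : ‖e‖ = 1 := heC.1
  set α : ℝ := Real.sqrt (1 - β^2) with hα
  have hβsq : β^2 ≤ 1/4 := by nlinarith
  have hα2 : α^2 = 1 - β^2 := Real.sq_sqrt (by nlinarith)
  have hα0 : 0 ≤ α := Real.sqrt_nonneg _
  have hαhalf : 1/2 ≤ α := by
    have h4 : Real.sqrt (1/4) ≤ α := Real.sqrt_le_sqrt (by nlinarith)
    rwa [show (1/4:ℝ) = (1/2)^2 by norm_num, Real.sqrt_sq (by norm_num)] at h4
  have hα1 : α < 1 := by nlinarith
  set a : Esp 3 := α • e + β • v with ha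
  set b : Esp 3 := α • e - β • v with hb
  have hee : (inner ℝ e e : ℝ) = 1 := by
    rw [real_inner_self_eq_norm_mul_norm, he]; norm_num
  have hvv : (inner ℝ v v : ℝ) = 1 := by
    rw [real_inner_self_eq_norm_mul_norm, hv]; norm_num
  have hve : (inner ℝ v e : ℝ) = 0 := by rw [real_inner_comm]; exact hev
  have hinner_ae : (inner ℝ a e : ℝ) = α := by
    rw [ha, inner_add_left, real_inner_smul_left, real_inner_smul_left, hee, hve]; ring
  have hinner_eb : (inner ℝ e b : ℝ) = α := by
    rw [hb, inner_sub_right, real_inner_smul_right, real_inner_smul_right, hee, hev]; ring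
  have hinner_ab : (inner ℝ a b : ℝ) = 2*α^2 - 1 := by
    simp only [ha, hb, inner_add_left, inner_add_right, inner_sub_left, inner_sub_right,
      real_inner_smul_left, real_inner_smul_right, hee, hvv, hev, hve]
    nlinarith [hα2]
  have hna : ‖a‖ = 1 := by
    have : (inner ℝ a a : ℝ) = 1 := by
      simp only [ha, inner_add_left, inner_add_right, inner_sub_left, inner_sub_right,
        real_inner_smul_left, real_inner_smul_right, hee, hvv, hev, hve]
      nlinarith [hα2]
    exact norm_eq_one_of_inner_self this
  have hnb : ‖b‖ = 1 := by
    have : (inner ℝ b b : ℝ) = 1 := by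
      simp only [hb, inner_add_left, inner_add_right, inner_sub_left, inner_sub_right,
        real_inner_smul_left, real_inner_smul_right, hee, hvv, hev, hve]
      nlinarith [hα2]
    exact norm_eq_one_of_inner_self this
  -- memberships
  have hmem : ∀ (g : Esp 3), ‖g‖ = 1 →
      (((inner ℝ g v : ℝ) = 0 ∧ (inner ℝ g e : ℝ) = 0) ∨ 2*β ≤ (inner ℝ g e : ℝ)) →
      0 ≤ (inner ℝ g a : ℝ) ∧ 0 ≤ (inner ℝ g b : ℝ) := by
    intro g hg H
    have hga : (inner ℝ g a : ℝ) = α * (inner ℝ g e : ℝ) + β * (inner ℝ g v : ℝ) := by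
      rw [ha, inner_add_right, real_inner_smul_right, real_inner_smul_right]
    have hgb : (inner ℝ g b : ℝ) = α * (inner ℝ g e : ℝ) - β * (inner ℝ g v : ℝ) := by
      rw [hb, inner_sub_right, real_inner_smul_right, real_inner_smul_right]
    rcases H with ⟨hgv, hge⟩ | hge
    · rw [hga, hgb, hgv, hge]; norm_num
    · have hbnd : |(inner ℝ g v : ℝ)| ≤ 1 := by
        have := abs_real_inner_le_norm g v; rwa [hg, hv, one_mul] at this
      rw [abs_le] at hbnd
      obtain ⟨hq1, hq2⟩ := hbnd
      have hp0 : 0 ≤ (inner ℝ g e : ℝ) := by linarith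
      have k1 : 0 ≤ (α - 1/2) * (inner ℝ g e : ℝ) := mul_nonneg (by linarith) hp0
      have k2 : 0 ≤ β * ((inner ℝ g v : ℝ) + 1) := mul_nonneg (le_of_lt hβ0) (by linarith)
      have k3 : 0 ≤ β * (1 - (inner ℝ g v : ℝ)) := mul_nonneg (le_of_lt hβ0) (by linarith)
      constructor
      · rw [hga]; linarith [k1, k2]
      · rw [hgb]; linarith [k1, k3]
  have haC : a ∈ Cb := by
    obtain ⟨k1a, k1b⟩ := hmem g1 norm_g1 H1
    obtain ⟨k2a, k2b⟩ := hmem g2 norm_g2 H2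
    obtain ⟨k3a, k3b⟩ := hmem g3 norm_g3 H3
    exact ⟨hna, k1a, k2a, k3a⟩
  have hbC : b ∈ Cb := by
    obtain ⟨k1a, k1b⟩ := hmem g1 norm_g1 H1
    obtain ⟨k2a, k2b⟩ := hmem g2 norm_g2 H2
    obtain ⟨k3a, k3b⟩ := hmem g3 norm_g3 H3
    exact ⟨hnb, k1b, k2b, k3b⟩
  -- e is strictly inside the arc from a to b
  have harc : e ∈ Arc a b := by
    refine ⟨he, ?_⟩
    unfold sdist
    rw [hinner_ae, hinner_eb, hinner_ab]
    exact arccos_double hα0 (le_of_lt hα1)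
  intro hext
  rcases hext.2 a haC b hbC harc with h | h
  · have hcon : (inner ℝ a e : ℝ) = 1 := by rw [← h]; exact hee
    rw [hinner_ae] at hcon; linarith
  · have hcon : (inner ℝ e b : ℝ) = 1 := by rw [← h]; exact hee
    rw [hinner_eb] at hcon; linarith


lemma inner_sq_le_one {a b : Esp 3} (ha : ‖a‖ = 1) (hb : ‖b‖ = 1) :
    (inner ℝ a b : ℝ)^2 ≤ 1 := by
  have := abs_real_inner_le_norm a b
  rw [ha, hb, one_mul] at this
  rw [abs_le] at this
  nlinarith [this.1, this.2]

lemma unit_of_cr {e g : Esp 3} (he : ‖e‖ = 1) (hg : ‖g‖ = 1) (hsq : (inner ℝ e g : ℝ)^2 ≠ 1) :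
    ∃ v : Esp 3, ‖v‖ = 1 ∧ (inner ℝ e v : ℝ) = 0 ∧ (inner ℝ g v : ℝ) = 0 := by
  set w : Esp 3 := cr e g with hw
  have hee : (inner ℝ e e : ℝ) = 1 := by
    rw [real_inner_self_eq_norm_mul_norm, he]; norm_num
  have hgg : (inner ℝ g g : ℝ) = 1 := by
    rw [real_inner_self_eq_norm_mul_norm, hg]; norm_num
  have hww : (inner ℝ w w : ℝ) = 1 - (inner ℝ e g : ℝ)^2 := by
    rw [hw, inner_cr_self, hee, hgg]; ring
  have hpos : 0 < (inner ℝ w w : ℝ) := by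
    have h1 := inner_sq_le_one he hg
    rw [hww]
    rcases lt_or_eq_of_le h1 with h | h
    · linarith
    · exact absurd h hsq
  have hwnorm : 0 < ‖w‖ := by
    have := real_inner_self_eq_norm_mul_norm w
    nlinarith [norm_nonneg w]
  refine ⟨‖w‖⁻¹ • w, ?_, ?_, ?_⟩
  · rw [norm_smul, norm_inv, norm_norm, inv_mul_cancel₀ (ne_of_gt hwnorm)]
  · rw [real_inner_smul_right, hw, inner_cr_left]; ring
  · rw [real_inner_smul_right, hw, inner_cr_right]; ring

lemma extreme_subset {e : Esp 3} (hext : ExtremeP Cb e) : e = pN ∨ e = pB1 ∨ e = pB2 := by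
  have heC := hext.1
  obtain ⟨heu, h1, h2, h3⟩ := heC
  have heC : e ∈ Cb := ⟨heu, h1, h2, h3⟩
  have hb1 : (inner ℝ g1 e : ℝ) ≤ 1 := by
    have := inner_sq_le_one norm_g1 heu; nlinarith
  have hb2 : (inner ℝ g2 e : ℝ) ≤ 1 := by
    have := inner_sq_le_one norm_g2 heu; nlinarith
  have hb3 : (inner ℝ g3 e : ℝ) ≤ 1 := by
    have := inner_sq_le_one norm_g3 heu; nlinarith
  by_cases hm1 : (inner ℝ g1 e : ℝ) = 0 <;> by_cases hm2 : (inner ℝ g2 e : ℝ) = 0 <;>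
    by_cases hm3 : (inner ℝ g3 e : ℝ) = 0
  · exact Or.inl (vert_N heu hm1 hm2 h3)
  · exact Or.inl (vert_N heu hm1 hm2 h3)
  · exact Or.inr (Or.inl (vert_B1 heu hm1 hm3 h2))
  · -- only g1 active
    exfalso
    have hp2 : 0 < (inner ℝ g2 e : ℝ) := lt_of_le_of_ne h2 (Ne.symm hm2)
    have hp3 : 0 < (inner ℝ g3 e : ℝ) := lt_of_le_of_ne h3 (Ne.symm hm3)
    have hsq : (inner ℝ e g1 : ℝ)^2 ≠ 1 := by
      rw [real_inner_comm, hm1]; norm_num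
    obtain ⟨v, hv, hev, hgv⟩ := unit_of_cr heu norm_g1 hsq
    set β : ℝ := min (inner ℝ g2 e : ℝ) (inner ℝ g3 e : ℝ) / 2 with hβ
    refine nonext e v heC hv hev β (by positivity) ?_ (Or.inl ⟨hgv, hm1⟩)
      (Or.inr ?_) (Or.inr ?_) hext
    · have : min (inner ℝ g2 e : ℝ) (inner ℝ g3 e : ℝ) ≤ 1 := le_trans (min_le_left _ _) hb2
      rw [hβ]; linarith
    · rw [hβ]; have := min_le_left (inner ℝ g2 e : ℝ) (inner ℝ g3 e : ℝ); linarith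
    · rw [hβ]; have := min_le_right (inner ℝ g2 e : ℝ) (inner ℝ g3 e : ℝ); linarith
  · exact Or.inr (Or.inr (vert_B2 heu hm2 hm3 h1))
  · -- only g2 active
    exfalso
    have hp1 : 0 < (inner ℝ g1 e : ℝ) := lt_of_le_of_ne h1 (Ne.symm hm1)
    have hp3 : 0 < (inner ℝ g3 e : ℝ) := lt_of_le_of_ne h3 (Ne.symm hm3)
    have hsq : (inner ℝ e g2 : ℝ)^2 ≠ 1 := by
      rw [real_inner_comm, hm2]; norm_num
    obtain ⟨v, hv, hev, hgv⟩ := unit_of_cr heu norm_g2 hsq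
    set β : ℝ := min (inner ℝ g1 e : ℝ) (inner ℝ g3 e : ℝ) / 2 with hβ
    refine nonext e v heC hv hev β (by positivity) ?_ (Or.inr ?_)
      (Or.inl ⟨hgv, hm2⟩) (Or.inr ?_) hext
    · have : min (inner ℝ g1 e : ℝ) (inner ℝ g3 e : ℝ) ≤ 1 := le_trans (min_le_left _ _) hb1
      rw [hβ]; linarith
    · rw [hβ]; have := min_le_left (inner ℝ g1 e : ℝ) (inner ℝ g3 e : ℝ); linarith
    · rw [hβ]; have := min_le_right (inner ℝ g1 e : ℝ) (inner ℝ g3 e : ℝ); linarith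
  · -- only g3 active
    exfalso
    have hp1 : 0 < (inner ℝ g1 e : ℝ) := lt_of_le_of_ne h1 (Ne.symm hm1)
    have hp2 : 0 < (inner ℝ g2 e : ℝ) := lt_of_le_of_ne h2 (Ne.symm hm2)
    have hsq : (inner ℝ e g3 : ℝ)^2 ≠ 1 := by
      rw [real_inner_comm, hm3]; norm_num
    obtain ⟨v, hv, hev, hgv⟩ := unit_of_cr heu norm_g3 hsq
    set β : ℝ := min (inner ℝ g1 e : ℝ) (inner ℝ g2 e : ℝ) / 2 with hβ
    refine nonext e v heC hv hev β (by positivity) ?_ (Or.inr ?_) (Or.inr ?_)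
      (Or.inl ⟨hgv, hm3⟩) hext
    · have : min (inner ℝ g1 e : ℝ) (inner ℝ g2 e : ℝ) ≤ 1 := le_trans (min_le_left _ _) hb1
      rw [hβ]; linarith
    · rw [hβ]; have := min_le_left (inner ℝ g1 e : ℝ) (inner ℝ g2 e : ℝ); linarith
    · rw [hβ]; have := min_le_right (inner ℝ g1 e : ℝ) (inner ℝ g2 e : ℝ); linarith
  · -- no active constraint
    exfalso
    have hp1 : 0 < (inner ℝ g1 e : ℝ) := lt_of_le_of_ne h1 (Ne.symm hm1)
    have hp2 : 0 < (inner ℝ g2 e : ℝ) := lt_of_le_of_ne h2 (Ne.symm hm2)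
    have hp3 : 0 < (inner ℝ g3 e : ℝ) := lt_of_le_of_ne h3 (Ne.symm hm3)
    have hr13p := r13_pos
    have hgood : ∃ g : Esp 3, ‖g‖ = 1 ∧ (inner ℝ e g : ℝ)^2 ≠ 1 := by
      by_cases hP : (inner ℝ e g1 : ℝ)^2 = 1
      · -- e = ± g1, hence e ≠ ± g3
        have hfac : ((inner ℝ e g1 : ℝ) - 1) * ((inner ℝ e g1 : ℝ) + 1) = 0 := by
          linear_combination hP
        have hcase : e = g1 ∨ e = -g1 := by
          rcases mul_eq_zero.1 hfac with h | h
          · left; exact inner_one_eq heu norm_g1 (by linarith)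
          · right
            have := inner_negone_eq heu norm_g1 (by linarith)
            rw [this]
            module
        have haux : ((1:ℝ)/r13)^2 ≠ 1 := by
          intro hcon
          rw [div_pow, one_pow] at hcon
          have hne : r13^2 ≠ 0 := by positivity
          rw [div_eq_one_iff_eq hne] at hcon
          rw [r13_sq] at hcon
          norm_num at hcon
        refine ⟨g3, norm_g3, ?_⟩
        rcases hcase with h | h
        · rw [h, i_g1_g3]; exact haux
        · rw [h, inner_neg_left, i_g1_g3]
          intro hcon
          apply haux
          rw [← neg_sq]; exact hcon
      · exact ⟨g1, norm_g1, hP⟩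
    obtain ⟨g, hgn, hsq⟩ := hgood
    obtain ⟨v, hv, hev, hgv⟩ := unit_of_cr heu hgn hsq
    set β : ℝ := min (min (inner ℝ g1 e : ℝ) (inner ℝ g2 e : ℝ)) (inner ℝ g3 e : ℝ) / 2 with hβ
    have hmin1 : min (min (inner ℝ g1 e : ℝ) (inner ℝ g2 e : ℝ)) (inner ℝ g3 e : ℝ) ≤ (inner ℝ g1 e : ℝ) :=
      le_trans (min_le_left _ _) (min_le_left _ _)
    have hmin2 : min (min (inner ℝ g1 e : ℝ) (inner ℝ g2 e : ℝ)) (inner ℝ g3 e : ℝ) ≤ (inner ℝ g2 e : ℝ) :=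
      le_trans (min_le_left _ _) (min_le_right _ _)
    have hmin3 : min (min (inner ℝ g1 e : ℝ) (inner ℝ g2 e : ℝ)) (inner ℝ g3 e : ℝ) ≤ (inner ℝ g3 e : ℝ) :=
      min_le_right _ _
    refine nonext e v heC hv hev β (by positivity) ?_ (Or.inr ?_) (Or.inr ?_) (Or.inr ?_) hext
    · rw [hβ]; linarith
    · rw [hβ]; linarith
    · rw [hβ]; linarith
    · rw [hβ]; linarith


lemma arccos_mono {x y : ℝ} (h : x ≤ y) : Real.arccos y ≤ Real.arccos x := by
  rw [Real.arccos, Real.arccos]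
  have := Real.monotone_arcsin h
  linarith

lemma arccos_neg_half : Real.arccos (-(1/2)) = 2*Real.pi/3 := by
  rw [Real.arccos_neg, arccos_half]
  ring

lemma sdiam_extreme_le : sdiam {e | ExtremeP Cb e} ≤ 2*Real.pi/3 := by
  apply Real.sSup_le
  · rintro t ⟨a, ha, b, hb, rfl⟩
    have hA := extreme_subset ha
    have hB := extreme_subset hb
    have hval : -(1/2) ≤ (inner ℝ a b : ℝ) := by
      have sN : (inner ℝ pN pN : ℝ) = 1 := by
        rw [real_inner_self_eq_norm_mul_norm, norm_pN]; norm_num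
      have sB1 : (inner ℝ pB1 pB1 : ℝ) = 1 := by
        rw [real_inner_self_eq_norm_mul_norm, norm_pB1]; norm_num
      have sB2 : (inner ℝ pB2 pB2 : ℝ) = 1 := by
        rw [real_inner_self_eq_norm_mul_norm, norm_pB2]; norm_num
      have c1 : (inner ℝ pB1 pN : ℝ) = -(1/2) := by rw [real_inner_comm]; exact i_N_B1
      have c2 : (inner ℝ pB2 pN : ℝ) = -(1/2) := by rw [real_inner_comm]; exact i_N_B2
      have c3 : (inner ℝ pB2 pB1 : ℝ) = 5/8 := by rw [real_inner_comm]; exact i_B1_B2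
      rcases hA with rfl | rfl | rfl <;> rcases hB with rfl | rfl | rfl <;>
        first
        | (rw [sN]; norm_num)
        | (rw [sB1]; norm_num)
        | (rw [sB2]; norm_num)
        | (rw [i_N_B1])
        | (rw [i_N_B2])
        | (rw [c1])
        | (rw [c2])
        | (rw [i_B1_B2]; norm_num)
        | (rw [c3]; norm_num)
    calc sdist a b = Real.arccos (inner ℝ a b : ℝ) := rfl
      _ ≤ Real.arccos (-(1/2)) := arccos_mono hval
      _ = 2*Real.pi/3 := arccos_neg_half
  · linarith [Real.pi_pos]

lemma sdiam_C_ge : Real.arccos (-(2/r13)) ≤ sdiam Cb := by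
  apply le_csSup
  · refine ⟨Real.pi, ?_⟩
    rintro t ⟨a, ha, b, hb, rfl⟩
    exact Real.arccos_le_pi _
  · refine ⟨pN, N_mem, pM, M_mem, ?_⟩
    unfold sdist
    rw [i_N_M]

lemma two_pi_third_lt : 2*Real.pi/3 < Real.arccos (-(2/r13)) := by
  have h13 := r13_pos
  have h4 := r13_lt_four
  have h2 := r13_gt_two
  rw [← arccos_neg_half]
  apply Real.strictAntiOn_arccos
  · constructor
    · rw [neg_le, neg_neg]
      rw [div_le_one h13]
      linarith
    · have : 0 < 2/r13 := by positivity
      linarith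
  · constructor
    · norm_num
    · norm_num
  · have : 1/2 < 2/r13 := by
      rw [div_lt_div_iff₀ (by norm_num) h13]
      linarith
    linarith


/-- There exists a spherical convex body C ⊂ S² whose thickness is at most π/2
but whose set of extreme points has diameter strictly smaller than diam C. -/
theorem stmt_6 :
    ∃ C : Set (Esp 3), SphBody C ∧ thick C ≤ Real.pi / 2 ∧
      sdiam {e | ExtremeP C e} < sdiam C := by
  refine ⟨Cb, Cb_body, thick_le, ?_⟩
  calc sdiam {e | ExtremeP Cb e} ≤ 2*Real.pi/3 := sdiam_extreme_le
    _ < Real.arccos (-(2/r13)) := two_pi_third_lt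
    _ ≤ sdiam Cb := sdiam_C_ge

end
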